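/- Let U⁰,V⁰,U¹,V¹ be M×M complex matrices with V⁰, V¹, and Ξ := (U⁰)†U¹ + (V⁰)†V¹ invertible, and suppose (U^j)ᵀ V^j + (V^j)ᵀ U^j = 0 for j = 0,1. Then the Schur complement of the block -(V¹)†V⁰ in S̃ = [[-(V¹)†V⁰, (U¹)†(V¹)*],[(V⁰)ᵀU⁰, (V⁰)ᵀ(V¹)*]] equals Ξ*, i.e., (V⁰)ᵀ(V¹)* - (V⁰)ᵀU⁰(-(V¹)†V⁰)⁻¹(U¹)†(V¹)* = conj(Ξ). -/
import Mathlib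


open scoped Matrix

/-- The Schur complement of the block `-(V¹)†V⁰` in
`S̃ = [[-(V¹)†V⁰, (U¹)†(V¹)*],[(V⁰)ᵀU⁰, (V⁰)ᵀ(V¹)*]]` equals `Ξ*`. -/
theorem stmt11 {M : ℕ} (U₀ V₀ U₁ V₁ : Matrix (Fin M) (Fin M) ℂ)
    (hV₀ : IsUnit V₀.det) (hV₁ : IsUnit V₁.det)
    (hVV : IsUnit (V₁ᴴ * V₀).det)
    (hΞ : IsUnit (U₀ᴴ * U₁ + V₀ᴴ * V₁).det)
    (h0 : U₀ᵀ * V₀ + V₀ᵀ * U₀ = 0)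
    (h1 : U₁ᵀ * V₁ + V₁ᵀ * U₁ = 0) :
    V₀ᵀ * (V₁.map (starRingEnd ℂ)) -
      V₀ᵀ * U₀ * (-(V₁ᴴ * V₀))⁻¹ * (U₁ᴴ * (V₁.map (starRingEnd ℂ)))
      = (U₀ᴴ * U₁ + V₀ᴴ * V₁).map (starRingEnd ℂ) := by
  have hV1H : IsUnit V₁ᴴ.det := by
    rw [Matrix.det_conjTranspose]; exact hV₁.star
  -- inverse of the negation
  have hinv : (-(V₁ᴴ * V₀))⁻¹ = -(V₀⁻¹ * (V₁ᴴ)⁻¹) := by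
    apply Matrix.inv_eq_right_inv
    rw [neg_mul_neg, Matrix.mul_assoc, ← Matrix.mul_assoc V₀,
      Matrix.mul_nonsing_inv _ hV₀, Matrix.one_mul, Matrix.mul_nonsing_inv _ hV1H]
  have e0 : V₀ᵀ * U₀ = -(U₀ᵀ * V₀) := eq_neg_of_add_eq_zero_right h0
  have e1' : U₁ᵀ * V₁ = -(V₁ᵀ * U₁) := eq_neg_of_add_eq_zero_left h1
  have mapneg : ∀ (A : Matrix (Fin M) (Fin M) ℂ),
      (-A).map (starRingEnd ℂ) = -(A.map (starRingEnd ℂ)) := by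
    intro A; ext i j; simp
  have e1 : U₁ᴴ * (V₁.map (starRingEnd ℂ)) = -(V₁ᴴ * (U₁.map (starRingEnd ℂ))) := by
    have := congrArg (fun A => A.map (starRingEnd ℂ)) e1'
    simpa [Matrix.conjTranspose, Matrix.map_mul, mapneg] using this
  have hU0H : U₀ᴴ.map (starRingEnd ℂ) = U₀ᵀ := by
    ext i j
    simp [Matrix.conjTranspose_apply, Matrix.map_apply]
  have hV0H : V₀ᴴ.map (starRingEnd ℂ) = V₀ᵀ := by
    ext i j
    simp [Matrix.conjTranspose_apply, Matrix.map_apply]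
  rw [Matrix.map_add, Matrix.map_mul, Matrix.map_mul, hU0H, hV0H, hinv, e1]
  have key : V₀ᵀ * U₀ * -(V₀⁻¹ * (V₁ᴴ)⁻¹) * -(V₁ᴴ * (U₁.map (starRingEnd ℂ)))
      = -(U₀ᵀ * (U₁.map (starRingEnd ℂ))) := by
    rw [e0, neg_mul_neg, mul_neg]
    congr 1
    rw [Matrix.mul_assoc U₀ᵀ V₀, ← Matrix.mul_assoc V₀, Matrix.mul_nonsing_inv _ hV₀,
      Matrix.one_mul, Matrix.mul_assoc U₀ᵀ, ← Matrix.mul_assoc (V₁ᴴ)⁻¹,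
      Matrix.nonsing_inv_mul _ hV1H, Matrix.one_mul]
  rw [key, sub_neg_eq_add, add_comm]
  exact fun a b => map_add (starRingEnd ℂ) a b
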